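/- Let C be the simple graph on vertex set {1,2,...,12} whose edges are those of the basic block B on {1,...,7} (edge set {12,14,15,17,23,24,25,26,27,34,35,45,46,47,67}) together with the 5-cycle edges {8,9},{9,10},{10,11},{11,12},{8,12} and the attachment edges {1,8},{7,12}. For every assignment of colors from {white, gray} to the vertices 9, 10, 11 in which not all three are white, the 2-coloring of C whose gray class is {1,3,5,6,7} together with those of 9,10,11 colored gray (so that 2, 4, 8, 12 and the white ones among 9,10,11 are white) is a legal 2-coloring of C. -/

import Mathlib

/-- A set `U` of vertices of a simple graph `G` induces a linear forest:
the induced subgraph is acyclic and every vertex of `U` has at most 2 neighbors in `U`. -/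
def InducesLinearForest {V : Type*} (G : SimpleGraph V) (U : Set V) : Prop :=
  (G.induce U).IsAcyclic ∧ ∀ v ∈ U, {w | w ∈ U ∧ G.Adj v w}.ncard ≤ 2

/-- A legal 2-coloring of `G` (`true` = gray, `false` = white): each color class
induces a linear forest. -/
def IsLegal2Coloring {V : Type*} (G : SimpleGraph V) (c : V → Bool) : Prop :=
  InducesLinearForest G {v | c v = true} ∧ InducesLinearForest G {v | c v = false}

/-- The edge set of the basic building block `B`. -/
def BEdges : Set (ℕ × ℕ) :=
  {(1,2),(1,4),(1,5),(1,7),(2,3),(2,4),(2,5),(2,6),(2,7),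
   (3,4),(3,5),(4,5),(4,6),(4,7),(6,7)}

/-- Vertex set {1, …, 12}. -/
abbrev V12 : Type := {m : ℕ // m ∈ Finset.Icc 1 12}

/-- The edge set of the three-variable clause gadget `C`: the block `B` together with
the 5-cycle 8–9–10–11–12–8 and the attachment edges {1,8} and {7,12}. -/
def CEdges : Set (ℕ × ℕ) :=
  BEdges ∪ {(8,9),(9,10),(10,11),(11,12),(8,12),(1,8),(7,12)}

/-- The three-variable clause gadget `C` on vertex set {1, …, 12}. -/
def CGraph : SimpleGraph V12 :=
  SimpleGraph.fromRel (fun u v => (u.val, v.val) ∈ CEdges)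

open SimpleGraph

section Helpers

/-- If an edge goes "up" one level in an injective potential, it is a bridge. -/
lemma bridge_of_up {V : Type*} {G : SimpleGraph V} {f : V → ℕ}
    (hinj : ∀ a b : V, f a = f b → a = b)
    (hadj : ∀ a b : V, G.Adj a b → f a + 1 = f b ∨ f b + 1 = f a)
    {u v : V} (huv : G.Adj u v) (hk : f u + 1 = f v) : G.IsBridge s(u, v) := by
  rw [isBridge_iff_adj_and_forall_walk_mem_edges]
  refine fun p => ?_
  have key : ∀ {a b : V} (w : G.Walk a b), f a ≤ f u → f u < f b → s(u,v) ∈ w.edges := by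
    intro a b w
    induction w with
    | nil => intro h1 h2; omega
    | @cons a x b hax p ih =>
      intro h1 h2
      by_cases hx : f x ≤ f u
      · exact List.mem_cons_of_mem _ (ih hx h2)
      · push_neg at hx
        rcases hadj a x hax with h | h
        · have ha : a = u := hinj _ _ (by omega)
          have hxv : x = v := hinj _ _ (by omega)
          subst ha; subst hxv
          simp [Walk.edges_cons]
        · omega
  exact key p le_rfl (by omega)

/-- A graph with an injective potential along which every edge moves by exactly one
is acyclic. -/
lemma acyclic_of_potential {V : Type*} {G : SimpleGraph V} (f : V → ℕ)
    (hinj : ∀ a b : V, f a = f b → a = b)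
    (hadj : ∀ a b : V, G.Adj a b → f a + 1 = f b ∨ f b + 1 = f a) :
    G.IsAcyclic := by
  rw [isAcyclic_iff_forall_adj_isBridge]
  intro u v huv
  rcases hadj u v huv with h | h
  · exact bridge_of_up hinj hadj huv h
  · rw [Sym2.eq_swap]; exact bridge_of_up hinj hadj huv.symm h

lemma induce_acyclic_of_potential {V : Type*} (G : SimpleGraph V) (U : Set V) (φ : V → ℕ)
    (h1 : ∀ a b : V, a ∈ U → b ∈ U → φ a = φ b → a = b)
    (h2 : ∀ a b : V, a ∈ U → b ∈ U → G.Adj a b → φ a + 1 = φ b ∨ φ b + 1 = φ a) :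
    (G.induce U).IsAcyclic :=
  acyclic_of_potential (fun w => φ w.val)
    (fun a b h => Subtype.ext (h1 _ _ a.2 b.2 h))
    (fun a b h => h2 _ _ a.2 b.2 h)

lemma degcond_helper {α : Type*} [Fintype α] [DecidableEq α] (G : SimpleGraph α)
    [DecidableRel G.Adj] (U : Set α) [DecidablePred (· ∈ U)]
    (h : ∀ v : α, v ∈ U → (Finset.univ.filter (fun w => w ∈ U ∧ G.Adj v w)).card ≤ 2) :
    ∀ v ∈ U, {w | w ∈ U ∧ G.Adj v w}.ncard ≤ 2 := by
  intro v hv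
  classical
  rw [Set.ncard_eq_toFinset_card', Set.toFinset_setOf]
  convert h v hv using 2

instance : DecidablePred (· ∈ BEdges) := fun p => by unfold BEdges; infer_instance
instance : DecidablePred (· ∈ CEdges) := fun p => by unfold CEdges; infer_instance

instance : DecidableRel CGraph.Adj := fun u v => by
  show Decidable (u ≠ v ∧ _)
  infer_instance

lemma forest_of (U : Set V12) [DecidablePred (· ∈ U)] (φ : V12 → ℕ)
    (h1 : ∀ a b : V12, a ∈ U → b ∈ U → φ a = φ b → a = b)
    (h2 : ∀ a b : V12, a ∈ U → b ∈ U → CGraph.Adj a b → φ a + 1 = φ b ∨ φ b + 1 = φ a)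
    (h3 : ∀ v : V12, v ∈ U →
      (Finset.univ.filter (fun w => w ∈ U ∧ CGraph.Adj v w)).card ≤ 2) :
    InducesLinearForest CGraph U :=
  ⟨induce_acyclic_of_potential _ _ φ h1 h2, degcond_helper _ _ h3⟩

/-- Potential given by position in a list. -/
def idx (L : List ℕ) : V12 → ℕ := fun v => L.idxOf v.val

end Helpers

/-- For every assignment of colors to the vertices 9, 10, 11 in which they are not
all white, the 2-coloring of `C` whose gray class is {1,3,5,6,7} together with the
gray ones among 9, 10, 11 (so that 2, 4, 8, 12 and the white ones among 9, 10, 11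
are white) is a legal 2-coloring of `C`. -/
theorem stmt3 (c : V12 → Bool)
    (hgray : ∀ v : V12, v.val ∈ ({1,3,5,6,7} : Set ℕ) → c v = true)
    (hwhite : ∀ v : V12, v.val ∈ ({2,4,8,12} : Set ℕ) → c v = false)
    (hnotall : ¬ (c ⟨9, by decide⟩ = false ∧ c ⟨10, by decide⟩ = false ∧
        c ⟨11, by decide⟩ = false)) :
    IsLegal2Coloring CGraph c := by
  have key : ∀ (Lg Lw : List ℕ),
      c = (fun v : V12 => decide (v.val ∈ Lg)) →
      (∀ a b : V12, a ∈ {v : V12 | decide (v.val ∈ Lg) = true} →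
        b ∈ {v : V12 | decide (v.val ∈ Lg) = true} →
        idx Lg a = idx Lg b → a = b) →
      (∀ a b : V12, a ∈ {v : V12 | decide (v.val ∈ Lg) = true} →
        b ∈ {v : V12 | decide (v.val ∈ Lg) = true} →
        CGraph.Adj a b → idx Lg a + 1 = idx Lg b ∨ idx Lg b + 1 = idx Lg a) →
      (∀ v : V12, v ∈ {v : V12 | decide (v.val ∈ Lg) = true} →
        (Finset.univ.filter
          (fun w => w ∈ {v : V12 | decide (v.val ∈ Lg) = true} ∧ CGraph.Adj v w)).card ≤ 2) →
      (∀ a b : V12, a ∈ {v : V12 | decide (v.val ∈ Lg) = false} →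
        b ∈ {v : V12 | decide (v.val ∈ Lg) = false} →
        idx Lw a = idx Lw b → a = b) →
      (∀ a b : V12, a ∈ {v : V12 | decide (v.val ∈ Lg) = false} →
        b ∈ {v : V12 | decide (v.val ∈ Lg) = false} →
        CGraph.Adj a b → idx Lw a + 1 = idx Lw b ∨ idx Lw b + 1 = idx Lw a) →
      (∀ v : V12, v ∈ {v : V12 | decide (v.val ∈ Lg) = false} →
        (Finset.univ.filter
          (fun w => w ∈ {v : V12 | decide (v.val ∈ Lg) = false} ∧ CGraph.Adj v w)).card ≤ 2) →
      IsLegal2Coloring CGraph c := by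
    intro Lg Lw hc g1 g2 g3 w1 w2 w3
    subst hc
    exact ⟨forest_of _ (idx Lg) g1 g2 g3, forest_of _ (idx Lw) w1 w2 w3⟩
  have hceq : ∀ (Lg : List ℕ),
      c ⟨9, by decide⟩ = decide ((9:ℕ) ∈ Lg) →
      c ⟨10, by decide⟩ = decide ((10:ℕ) ∈ Lg) →
      c ⟨11, by decide⟩ = decide ((11:ℕ) ∈ Lg) →
      decide ((1:ℕ) ∈ Lg) = true → decide ((3:ℕ) ∈ Lg) = true →
      decide ((5:ℕ) ∈ Lg) = true → decide ((6:ℕ) ∈ Lg) = true →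
      decide ((7:ℕ) ∈ Lg) = true →
      decide ((2:ℕ) ∈ Lg) = false → decide ((4:ℕ) ∈ Lg) = false →
      decide ((8:ℕ) ∈ Lg) = false → decide ((12:ℕ) ∈ Lg) = false →
      c = (fun v : V12 => decide (v.val ∈ Lg)) := by
    intro Lg e9 e10 e11 m1 m3 m5 m6 m7 n2 n4 n8 n12
    funext v
    obtain ⟨n, hn⟩ := v
    have hn' : 1 ≤ n ∧ n ≤ 12 := by simpa using hn
    obtain ⟨ha, hb⟩ := hn'
    interval_cases n
    · rw [m1]; exact hgray _ (by norm_num)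
    · rw [n2]; exact hwhite _ (by norm_num)
    · rw [m3]; exact hgray _ (by norm_num)
    · rw [n4]; exact hwhite _ (by norm_num)
    · rw [m5]; exact hgray _ (by norm_num)
    · rw [m6]; exact hgray _ (by norm_num)
    · rw [m7]; exact hgray _ (by norm_num)
    · rw [n8]; exact hwhite _ (by norm_num)
    · exact e9
    · exact e10
    · exact e11
    · rw [n12]; exact hwhite _ (by norm_num)
  cases h9 : c ⟨9, by decide⟩ <;> cases h10 : c ⟨10, by decide⟩ <;> cases h11 : c ⟨11, by decide⟩
  · exact absurd ⟨h9, h10, h11⟩ hnotall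
  · -- gray: 11
    exact key [3,5,1,7,6,11] [2,4,10,9,8,12]
      (hceq _ h9 h10 h11 rfl rfl rfl rfl rfl rfl rfl rfl rfl)
      (by decide) (by decide) (by decide) (by decide) (by decide) (by decide)
  · -- gray: 10
    exact key [3,5,1,7,6,10] [2,4,9,8,12,11]
      (hceq _ h9 h10 h11 rfl rfl rfl rfl rfl rfl rfl rfl rfl)
      (by decide) (by decide) (by decide) (by decide) (by decide) (by decide)
  · -- gray: 10,11
    exact key [3,5,1,7,6,10,11] [2,4,9,8,12]
      (hceq _ h9 h10 h11 rfl rfl rfl rfl rfl rfl rfl rfl rfl)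
      (by decide) (by decide) (by decide) (by decide) (by decide) (by decide)
  · -- gray: 9
    exact key [3,5,1,7,6,9] [2,4,8,12,11,10]
      (hceq _ h9 h10 h11 rfl rfl rfl rfl rfl rfl rfl rfl rfl)
      (by decide) (by decide) (by decide) (by decide) (by decide) (by decide)
  · -- gray: 9,11
    exact key [3,5,1,7,6,9,11] [2,4,10,8,12]
      (hceq _ h9 h10 h11 rfl rfl rfl rfl rfl rfl rfl rfl rfl)
      (by decide) (by decide) (by decide) (by decide) (by decide) (by decide)
  · -- gray: 9,10
    exact key [3,5,1,7,6,9,10] [2,4,8,12,11]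
      (hceq _ h9 h10 h11 rfl rfl rfl rfl rfl rfl rfl rfl rfl)
      (by decide) (by decide) (by decide) (by decide) (by decide) (by decide)
  · -- gray: 9,10,11
    exact key [3,5,1,7,6,9,10,11] [2,4,8,12]
      (hceq _ h9 h10 h11 rfl rfl rfl rfl rfl rfl rfl rfl rfl)
      (by decide) (by decide) (by decide) (by decide) (by decide) (by decide)
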